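/- arXiv:1804.07510 — 2 statements merged into one kernel-verified Lean document; each statement's English description precedes it below -/
import Mathlib

section
/- Let M ≥ 1 and P ≥ 2 be integers, G ∈ ℂ, and on a probability space let S^{[m]} (m = 1,…,M) and E^{[m,p]} (m = 1,…,M, p = 1,…,P) be square-integrable complex-valued random variables such that all E^{[m,p]} have mean zero and common variance E[|E^{[m,p]}|²] = σ_E², and the family {E^{[m,p]}} is pairwise uncorrelated (E[E^{[m,p]} · conj(E^{[m',p']})] = 0 whenever (m,p) ≠ (m',p')). Define Ĝ^{[m,p]} = G + S^{[m]} + E^{[m,p]} and Ĝ^{[m]} = (1/P) Σ_{p=1}^{P} Ĝ^{[m,p]}. Then the noise variance estimate σ̂²_n = (1/(M² P (P−1))) Σ_{m=1}^{M} Σ_{p=1}^{P} |Ĝ^{[m]} − Ĝ^{[m,p]}|² satisfies E[σ̂²_n] = σ_E² / (M P). -/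
open MeasureTheory Finset

section Aux

variable {Ω : Type*} [MeasurableSpace Ω] {μ : Measure Ω}

lemma integrable_mul_conj' {f g : Ω → ℂ} (hf : MemLp f 2 μ) (hg : MemLp g 2 μ) :
    Integrable (fun ω => f ω * (starRingEnd ℂ) (g ω)) μ := by
  have h := L2.integrable_inner (𝕜 := ℂ) (hg.toLp g) (hf.toLp f)
  refine h.congr ?_
  filter_upwards [hf.coeFn_toLp, hg.coeFn_toLp] with ω h1 h2
  simp [h1, h2, RCLike.inner_apply, mul_comm]

lemma key_cov {P : ℕ} (σE : ℝ) (f : Fin P → Ω → ℂ) (hf : ∀ q, MemLp (f q) 2 μ)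
    (hcov : ∀ q q', ∫ ω, f q ω * (starRingEnd ℂ) (f q' ω) ∂μ
      = if q = q' then (σE : ℂ) else 0)
    (c : Fin P → ℂ) :
    ∫ ω, (∑ q, c q * f q ω) * (starRingEnd ℂ) (∑ q', c q' * f q' ω) ∂μ
      = (∑ q, c q * (starRingEnd ℂ) (c q)) * σE := by
  have hint : ∀ q q' : Fin P, Integrable
      (fun ω => (c q * (starRingEnd ℂ) (c q')) * (f q ω * (starRingEnd ℂ) (f q' ω))) μ :=
    fun q q' => (integrable_mul_conj' (hf q) (hf q')).const_mul _
  have expand : ∀ ω : Ω, (∑ q, c q * f q ω) * (starRingEnd ℂ) (∑ q', c q' * f q' ω)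
      = ∑ q, ∑ q', (c q * (starRingEnd ℂ) (c q')) * (f q ω * (starRingEnd ℂ) (f q' ω)) := by
    intro ω
    rw [map_sum, sum_mul_sum]
    refine Finset.sum_congr rfl fun q _ => Finset.sum_congr rfl fun q' _ => ?_
    simp only [map_mul]
    ring
  simp_rw [expand]
  rw [integral_finset_sum _ (fun q _ => integrable_finset_sum _ (fun q' _ => hint q q'))]
  rw [Finset.sum_mul]
  refine Finset.sum_congr rfl fun q _ => ?_
  rw [integral_finset_sum _ (fun q' _ => hint q q')]
  simp_rw [integral_const_mul, hcov, mul_ite, mul_zero]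
  rw [Finset.sum_ite_eq Finset.univ q]
  simp [mul_assoc]

end Aux

/-- **Expected value of the robust noise variance estimate in the process noise case.**
With `Ĝ^{[m,p]} = G + S^{[m]} + E^{[m,p]}` and `Ĝ^{[m]} = (1/P) Σ_p Ĝ^{[m,p]}`, where the
combined process-and-output-noise terms `E^{[m,p]}` are zero mean with common variance
`σ_E²` and pairwise uncorrelated, the noise variance estimate
`σ̂²_n = (1/(M²P(P−1))) Σ_m Σ_p |Ĝ^{[m]} − Ĝ^{[m,p]}|²` has expectation `σ_E²/(MP)`. -/
theorem robust_bla_noise_variance_expectation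
    {Ω : Type*} [MeasurableSpace Ω] (μ : Measure Ω) [IsProbabilityMeasure μ]
    (M P : ℕ) (hM : 1 ≤ M) (hP : 2 ≤ P) (G : ℂ) (σE : ℝ)
    (S : Fin M → Ω → ℂ) (E : Fin M → Fin P → Ω → ℂ)
    (hS2 : ∀ m, MemLp (S m) 2 μ) (hE2 : ∀ m p, MemLp (E m p) 2 μ)
    (hEmean : ∀ m p, ∫ ω, E m p ω ∂μ = 0)
    (hEvar : ∀ m p, ∫ ω, ‖E m p ω‖ ^ 2 ∂μ = σE)
    (hEuncorr : ∀ m p m' p', (m, p) ≠ (m', p') →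
      ∫ ω, E m p ω * (starRingEnd ℂ) (E m' p' ω) ∂μ = 0) :
    ∫ ω, (1 / ((M : ℝ) ^ 2 * (P : ℝ) * ((P : ℝ) - 1))) *
        ∑ m : Fin M, ∑ p : Fin P,
          ‖(1 / (P : ℂ)) * (∑ p' : Fin P, (G + S m ω + E m p' ω))
            - (G + S m ω + E m p ω)‖ ^ 2 ∂μ
      = σE / ((M : ℝ) * (P : ℝ)) := by
  have hPC : (P : ℂ) ≠ 0 := Nat.cast_ne_zero.mpr (by omega)
  set c : Fin P → Fin P → ℂ := fun p q => 1 / (P : ℂ) - if q = p then 1 else 0 with hc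
  have hD : ∀ m p (ω : Ω),
      (1 / (P : ℂ)) * (∑ p' : Fin P, (G + S m ω + E m p' ω)) - (G + S m ω + E m p ω)
        = ∑ q, c p q * E m q ω := by
    intro m p ω
    have h2 : ∑ q, c p q * E m q ω
        = (∑ q, (1 / (P : ℂ)) * E m q ω) - E m p ω := by
      simp only [hc, sub_mul, ite_mul, one_mul, zero_mul, Finset.sum_sub_distrib,
        Finset.sum_ite_eq' Finset.univ p, Finset.mem_univ, if_true]
    rw [h2]
    simp only [Finset.sum_add_distrib, Finset.sum_const, Finset.card_univ, Fintype.card_fin,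
      nsmul_eq_mul, ← Finset.mul_sum, mul_add]
    field_simp
    ring
  have hnorm : ∀ z : ℂ, ‖z‖ ^ 2 = (z * (starRingEnd ℂ) z).re := by
    intro z
    rw [Complex.mul_conj, Complex.ofReal_re, ← Complex.sq_norm]
  have hcov : ∀ m (q q' : Fin P), ∫ ω, E m q ω * (starRingEnd ℂ) (E m q' ω) ∂μ
      = if q = q' then (σE : ℂ) else 0 := by
    intro m q q'
    by_cases h : q = q'
    · subst h
      rw [if_pos rfl]
      have h3 : ∀ ω : Ω, E m q ω * (starRingEnd ℂ) (E m q ω) = ((‖E m q ω‖ ^ 2 : ℝ) : ℂ) := by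
        intro ω
        rw [Complex.mul_conj]
        norm_cast
        rw [← Complex.sq_norm]
      simp_rw [h3]
      rw [show (σE : ℂ) = ((∫ ω, ‖E m q ω‖ ^ 2 ∂μ : ℝ) : ℂ) by rw [hEvar]]
      exact integral_ofReal
    · rw [if_neg h]
      exact hEuncorr m q m q' (by simp [h])
  have hDmem : ∀ m p, MemLp (fun ω => ∑ q, c p q * E m q ω) 2 μ := fun m p =>
    memLp_finset_sum _ (fun q _ => (hE2 m q).const_mul _)
  have hDint : ∀ m p, Integrable (fun ω =>
      ((∑ q, c p q * E m q ω) * (starRingEnd ℂ) (∑ q, c p q * E m q ω)).re) μ :=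
    fun m p => (integrable_mul_conj' (hDmem m p) (hDmem m p)).re
  have hcsum : ∀ p : Fin P, (∑ q, c p q * (starRingEnd ℂ) (c p q)) = ((P : ℂ) - 1) / P := by
    intro p
    have h1 : ∀ q, c p q * (starRingEnd ℂ) (c p q)
        = 1 / (P : ℂ) ^ 2 - (2 / P) * (if q = p then 1 else 0) + (if q = p then 1 else 0) := by
      intro q
      by_cases h : q = p
      · have hcp : c p q = 1 / (P : ℂ) - 1 := by simp [hc, h]
        rw [hcp, if_pos h, map_sub, map_one, map_div₀, map_one, map_natCast]
        field_simp
        ring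
      · have hcq : c p q = 1 / (P : ℂ) := by simp [hc, h]
        rw [hcq, if_neg h, map_div₀, map_one, map_natCast]
        field_simp
        ring
    simp_rw [h1]
    rw [Finset.sum_add_distrib, Finset.sum_sub_distrib, Finset.sum_const,
      ← Finset.mul_sum, Finset.sum_ite_eq' Finset.univ p]
    simp only [Finset.mem_univ, if_true, Finset.card_univ, Fintype.card_fin, nsmul_eq_mul,
      mul_one]
    field_simp
    ring
  have hexp : ∀ (m : Fin M) (p : Fin P), ∫ ω,
      ((∑ q, c p q * E m q ω) * (starRingEnd ℂ) (∑ q, c p q * E m q ω)).re ∂μ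
        = ((P : ℝ) - 1) / P * σE := by
    intro m p
    have hre := integral_re (𝕜 := ℂ) (integrable_mul_conj' (hDmem m p) (hDmem m p))
    rw [RCLike.re_eq_complex_re] at hre
    rw [hre, key_cov σE (E m) (fun q => hE2 m q) (hcov m) (c p), hcsum p]
    rw [show ((P : ℂ) - 1) / P * (σE : ℂ) = ((((P : ℝ) - 1) / P * σE : ℝ) : ℂ) by
      push_cast; ring]
    rw [Complex.ofReal_re]
  simp_rw [hD, hnorm]
  rw [integral_const_mul]
  rw [integral_finset_sum _ (fun m _ => integrable_finset_sum _ (fun p _ => hDint m p))]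
  have hsum : ∀ m : Fin M, ∫ ω, (∑ p : Fin P,
      ((∑ q, c p q * E m q ω) * (starRingEnd ℂ) (∑ q, c p q * E m q ω)).re) ∂μ
        = ∑ p : Fin P, ((P : ℝ) - 1) / P * σE := by
    intro m
    rw [integral_finset_sum _ (fun p _ => hDint m p)]
    exact Finset.sum_congr rfl fun p _ => hexp m p
  simp_rw [hsum]
  simp only [Finset.sum_const, Finset.card_univ, Fintype.card_fin, nsmul_eq_mul]
  have hMR : (M : ℝ) ≠ 0 := Nat.cast_ne_zero.mpr (by omega)
  have hPR : (P : ℝ) ≠ 0 := Nat.cast_ne_zero.mpr (by omega)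
  have hP1 : (P : ℝ) - 1 ≠ 0 := by
    have : (2 : ℝ) ≤ (P : ℝ) := by exact_mod_cast hP
    linarith
  field_simp
end

section
/- Let f : ℝ → ℝ be f(x) = x + 0.1·x³, let σ_u > 0 and σ_n ≥ 0, and let U and N be independent real Gaussian random variables with mean 0 and variances σ_u² and σ_n² respectively. Then the function b ↦ E[(f(U + N) − b·U)²] on ℝ attains its unique minimum at b₀ = 1 + 0.3·σ_u² + 0.3·σ_n², and moreover b₀ = E[f(U+N)·U]/E[U²]. -/
open MeasureTheory ProbabilityTheory Real
open scoped NNReal ENNReal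

namespace HammAux

/-! ### Raw Gaussian integrals -/

lemma integrable_pow_mul_gauss {b : ℝ} (hb : 0 < b) (n : ℕ) :
    Integrable fun x : ℝ => x ^ n * Real.exp (-b * x ^ 2) := by
  have h : (-1 : ℝ) < n := lt_of_lt_of_le neg_one_lt_zero (Nat.cast_nonneg n)
  simpa [Real.rpow_natCast] using integrable_rpow_mul_exp_neg_mul_sq hb h

lemma raw_one {b : ℝ} (hb : 0 < b) :
    ∫ x : ℝ, x ^ 1 * Real.exp (-b * x ^ 2) = 0 := by
  have hder : ∀ x : ℝ, HasDerivAt (fun x : ℝ => Real.exp (-b * x ^ 2))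
      (-(2 * b) * (x ^ 1 * Real.exp (-b * x ^ 2))) x := by
    intro x
    have h1 : HasDerivAt (fun x : ℝ => -b * x ^ 2) (-b * (2 * x)) x := by
      simpa using ((hasDerivAt_pow 2 x).const_mul (-b))
    convert h1.exp using 1
    ring
  have hint : Integrable fun x : ℝ => -(2 * b) * (x ^ 1 * Real.exp (-b * x ^ 2)) :=
    (integrable_pow_mul_gauss hb 1).const_mul _
  have h0 := integral_eq_zero_of_hasDerivAt_of_integrable hder hint
    (integrable_exp_neg_mul_sq hb)
  rw [integral_const_mul] at h0
  have h2b : -(2 * b) ≠ 0 := neg_ne_zero.mpr (by positivity)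
  exact (mul_eq_zero.mp h0).resolve_left h2b

lemma raw_rec {b : ℝ} (hb : 0 < b) (n : ℕ) :
    ∫ x : ℝ, x ^ (n + 2) * Real.exp (-b * x ^ 2)
      = ((n + 1 : ℝ) / (2 * b)) * ∫ x : ℝ, x ^ n * Real.exp (-b * x ^ 2) := by
  have hder : ∀ x : ℝ, HasDerivAt (fun x : ℝ => x ^ (n + 1) * Real.exp (-b * x ^ 2))
      ((n + 1 : ℝ) * (x ^ n * Real.exp (-b * x ^ 2))
        - (2 * b) * (x ^ (n + 2) * Real.exp (-b * x ^ 2))) x := by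
    intro x
    have h1 : HasDerivAt (fun x : ℝ => x ^ (n + 1)) ((n + 1 : ℝ) * x ^ n) x := by
      simpa using hasDerivAt_pow (n + 1) x
    have h2 : HasDerivAt (fun x : ℝ => -b * x ^ 2) (-b * (2 * x)) x := by
      simpa using ((hasDerivAt_pow 2 x).const_mul (-b))
    have := h1.mul h2.exp
    refine this.congr_deriv ?_
    ring
  have hintd : Integrable fun x : ℝ =>
      (n + 1 : ℝ) * (x ^ n * Real.exp (-b * x ^ 2))
        - (2 * b) * (x ^ (n + 2) * Real.exp (-b * x ^ 2)) :=
    ((integrable_pow_mul_gauss hb n).const_mul _).sub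
      ((integrable_pow_mul_gauss hb (n + 2)).const_mul _)
  have h0 := integral_eq_zero_of_hasDerivAt_of_integrable hder hintd
    (integrable_pow_mul_gauss hb (n + 1))
  rw [integral_sub ((integrable_pow_mul_gauss hb n).const_mul _)
    ((integrable_pow_mul_gauss hb (n + 2)).const_mul _), integral_const_mul,
    integral_const_mul] at h0
  have h2b : (2 * b) ≠ 0 := by positivity
  rw [div_mul_eq_mul_div, eq_div_iff h2b]
  linarith [h0]

/-! ### Gaussian measure conversions -/

lemma gaussianPDFReal_zero_eq (v : ℝ≥0) (x : ℝ) :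
    gaussianPDFReal 0 v x
      = (√(2 * π * v))⁻¹ * Real.exp (-(2 * (v : ℝ))⁻¹ * x ^ 2) := by
  rw [gaussianPDFReal]
  congr 2
  rw [sub_zero]
  ring

lemma gaussianPDF_eq_toNNReal (v : ℝ≥0) :
    gaussianPDF 0 v = fun x => ((gaussianPDFReal 0 v x).toNNReal : ℝ≥0∞) := rfl

lemma integral_gaussianReal_eq {v : ℝ≥0} (hv : v ≠ 0) (f : ℝ → ℝ) :
    ∫ x, f x ∂(gaussianReal 0 v) = ∫ x, gaussianPDFReal 0 v x * f x := by
  rw [gaussianReal_of_var_ne_zero 0 hv, gaussianPDF_eq_toNNReal,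
    integral_withDensity_eq_integral_smul
      ((measurable_gaussianPDFReal 0 v).real_toNNReal) f]
  congr 1
  funext x
  rw [NNReal.smul_def, Real.coe_toNNReal _ (gaussianPDFReal_nonneg 0 v x), smul_eq_mul]

lemma integrable_gaussianReal_iff {v : ℝ≥0} (hv : v ≠ 0) (f : ℝ → ℝ) :
    Integrable f (gaussianReal 0 v)
      ↔ Integrable (fun x => gaussianPDFReal 0 v x * f x) := by
  rw [gaussianReal_of_var_ne_zero 0 hv, gaussianPDF_eq_toNNReal,
    integrable_withDensity_iff_integrable_smul
      ((measurable_gaussianPDFReal 0 v).real_toNNReal)]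
  apply integrable_congr
  filter_upwards with x
  rw [NNReal.smul_def, Real.coe_toNNReal _ (gaussianPDFReal_nonneg 0 v x), smul_eq_mul]

lemma inv_two_v_pos {v : ℝ≥0} (hv : v ≠ 0) : 0 < (2 * (v : ℝ))⁻¹ := by
  have : (0 : ℝ) < v := by positivity
  positivity

lemma integrable_pow_gaussianReal (v : ℝ≥0) (n : ℕ) :
    Integrable (fun x : ℝ => x ^ n) (gaussianReal 0 v) := by
  rcases eq_or_ne v 0 with rfl | hv
  · rw [gaussianReal_zero_var]
    exact (integrable_const ((0:ℝ) ^ n)).congr (ae_eq_dirac (fun x : ℝ => x ^ n)).symm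
  · rw [integrable_gaussianReal_iff hv]
    have heq : (fun x : ℝ => gaussianPDFReal 0 v x * x ^ n)
        = fun x => (√(2 * π * v))⁻¹ * (x ^ n * Real.exp (-(2 * (v : ℝ))⁻¹ * x ^ 2)) := by
      funext x
      rw [gaussianPDFReal_zero_eq]
      ring
    rw [heq]
    exact (integrable_pow_mul_gauss (inv_two_v_pos hv) n).const_mul _

lemma integral_pow_gaussianReal_rec {v : ℝ≥0} (hv : v ≠ 0) (n : ℕ) :
    ∫ x, x ^ (n + 2) ∂(gaussianReal 0 v)
      = (n + 1 : ℝ) * (v : ℝ) * ∫ x, x ^ n ∂(gaussianReal 0 v) := by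
  have hb := inv_two_v_pos hv
  have key : ∀ m : ℕ, ∫ x, x ^ m ∂(gaussianReal 0 v)
      = (√(2 * π * v))⁻¹ * ∫ x : ℝ, x ^ m * Real.exp (-(2 * (v : ℝ))⁻¹ * x ^ 2) := by
    intro m
    rw [integral_gaussianReal_eq hv, ← integral_const_mul]
    congr 1
    funext x
    rw [gaussianPDFReal_zero_eq]
    ring
  rw [key, key, raw_rec hb n]
  have hv' : (0 : ℝ) < v := by positivity
  have : ((n : ℝ) + 1) / (2 * (2 * (v : ℝ))⁻¹) = (n + 1 : ℝ) * (v : ℝ) := by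
    field_simp
  rw [this]
  ring

lemma integral_one_gaussianReal (v : ℝ≥0) :
    ∫ x, (1 : ℝ) ∂(gaussianReal 0 v) = 1 := by
  simp

lemma moment_one_gaussianReal (v : ℝ≥0) :
    ∫ x, x ∂(gaussianReal 0 v) = 0 := by
  rcases eq_or_ne v 0 with rfl | hv
  · rw [gaussianReal_zero_var, integral_dirac]
  · rw [integral_gaussianReal_eq hv]
    have heq : (fun x : ℝ => gaussianPDFReal 0 v x * x)
        = fun x => (√(2 * π * v))⁻¹ * (x ^ 1 * Real.exp (-(2 * (v : ℝ))⁻¹ * x ^ 2)) := by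
      funext x
      rw [gaussianPDFReal_zero_eq]
      ring
    rw [heq, integral_const_mul, raw_one (inv_two_v_pos hv), mul_zero]

lemma moment_two_gaussianReal (v : ℝ≥0) :
    ∫ x, x ^ 2 ∂(gaussianReal 0 v) = (v : ℝ) := by
  rcases eq_or_ne v 0 with rfl | hv
  · rw [gaussianReal_zero_var, integral_dirac]
    simp
  · have := integral_pow_gaussianReal_rec hv 0
    simpa using this

lemma moment_three_gaussianReal (v : ℝ≥0) :
    ∫ x, x ^ 3 ∂(gaussianReal 0 v) = 0 := by
  rcases eq_or_ne v 0 with rfl | hv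
  · rw [gaussianReal_zero_var, integral_dirac]
    simp
  · have h := integral_pow_gaussianReal_rec hv 1
    have h1 := moment_one_gaussianReal v
    simp only [pow_one] at h
    rw [show (1:ℕ) + 2 = 3 from rfl] at h
    rw [h, h1, mul_zero]

lemma moment_four_gaussianReal (v : ℝ≥0) :
    ∫ x, x ^ 4 ∂(gaussianReal 0 v) = 3 * (v : ℝ) ^ 2 := by
  rcases eq_or_ne v 0 with rfl | hv
  · rw [gaussianReal_zero_var, integral_dirac]
    simp
  · have h := integral_pow_gaussianReal_rec hv 2
    rw [show (2:ℕ) + 2 = 4 from rfl] at h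
    rw [h, moment_two_gaussianReal]
    norm_num
    ring

/-! ### Product measure lemmas -/

variable (vu vn : ℝ≥0)

lemma integrable_monomial (i j : ℕ) :
    Integrable (fun p : ℝ × ℝ => p.1 ^ i * p.2 ^ j)
      ((gaussianReal 0 vu).prod (gaussianReal 0 vn)) :=
  (integrable_pow_gaussianReal vu i).mul_prod (integrable_pow_gaussianReal vn j)

lemma integral_monomial (i j : ℕ) :
    ∫ p : ℝ × ℝ, p.1 ^ i * p.2 ^ j ∂((gaussianReal 0 vu).prod (gaussianReal 0 vn))
      = (∫ x, x ^ i ∂(gaussianReal 0 vu)) * (∫ x, x ^ j ∂(gaussianReal 0 vn)) :=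
  integral_prod_mul _ _

lemma integrable_add_pow (k : ℕ) :
    Integrable (fun p : ℝ × ℝ => (p.1 + p.2) ^ k)
      ((gaussianReal 0 vu).prod (gaussianReal 0 vn)) := by
  have h : (fun p : ℝ × ℝ => (p.1 + p.2) ^ k)
      = fun p => ∑ i ∈ Finset.range (k + 1),
          p.1 ^ i * p.2 ^ (k - i) * (k.choose i : ℝ) := by
    funext p
    rw [add_pow]
  rw [h]
  exact integrable_finset_sum _ fun i _ => (integrable_monomial vu vn i (k - i)).mul_const _

lemma integrable_fst_mul_add_pow (k : ℕ) :
    Integrable (fun p : ℝ × ℝ => p.1 * (p.1 + p.2) ^ k)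
      ((gaussianReal 0 vu).prod (gaussianReal 0 vn)) := by
  have h : (fun p : ℝ × ℝ => p.1 * (p.1 + p.2) ^ k)
      = fun p => ∑ i ∈ Finset.range (k + 1),
          p.1 ^ (i + 1) * p.2 ^ (k - i) * (k.choose i : ℝ) := by
    funext p
    rw [add_pow, Finset.mul_sum]
    exact Finset.sum_congr rfl fun i _ => by ring
  rw [h]
  exact integrable_finset_sum _ fun i _ =>
    (integrable_monomial vu vn (i + 1) (k - i)).mul_const _

lemma moment_zero_gaussianReal (v : ℝ≥0) :
    ∫ x, x ^ 0 ∂(gaussianReal 0 v) = 1 := by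
  simp

lemma moment_one'_gaussianReal (v : ℝ≥0) :
    ∫ x, x ^ 1 ∂(gaussianReal 0 v) = 0 := by
  simpa using moment_one_gaussianReal v

lemma integral_cross :
    ∫ p : ℝ × ℝ, ((p.1 + p.2) + 0.1 * (p.1 + p.2) ^ 3) * p.1
        ∂((gaussianReal 0 vu).prod (gaussianReal 0 vn))
      = (vu : ℝ) * (1 + 0.3 * (vu : ℝ) + 0.3 * (vn : ℝ)) := by
  have I20 := integrable_monomial vu vn 2 0
  have I11 := integrable_monomial vu vn 1 1
  have I40 := integrable_monomial vu vn 4 0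
  have I31 := integrable_monomial vu vn 3 1
  have I22 := integrable_monomial vu vn 2 2
  have I13 := integrable_monomial vu vn 1 3
  have hsplit : (fun p : ℝ × ℝ => ((p.1 + p.2) + 0.1 * (p.1 + p.2) ^ 3) * p.1)
      = fun p => p.1 ^ 2 * p.2 ^ 0 + (p.1 ^ 1 * p.2 ^ 1 + ((0.1 : ℝ) * (p.1 ^ 4 * p.2 ^ 0)
          + ((0.3 : ℝ) * (p.1 ^ 3 * p.2 ^ 1) + ((0.3 : ℝ) * (p.1 ^ 2 * p.2 ^ 2)
          + (0.1 : ℝ) * (p.1 ^ 1 * p.2 ^ 3))))) := by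
    funext p
    ring
  have T5 : Integrable (fun p : ℝ × ℝ => (0.1 : ℝ) * (p.1 ^ 1 * p.2 ^ 3))
      ((gaussianReal 0 vu).prod (gaussianReal 0 vn)) := I13.const_mul 0.1
  have T5' : Integrable (fun p : ℝ × ℝ => (0.3 : ℝ) * (p.1 ^ 2 * p.2 ^ 2))
      ((gaussianReal 0 vu).prod (gaussianReal 0 vn)) := I22.const_mul 0.3
  have T4 : Integrable (fun p : ℝ × ℝ =>
      (0.3 : ℝ) * (p.1 ^ 2 * p.2 ^ 2) + (0.1 : ℝ) * (p.1 ^ 1 * p.2 ^ 3))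
      ((gaussianReal 0 vu).prod (gaussianReal 0 vn)) := T5'.add T5
  have T3' : Integrable (fun p : ℝ × ℝ => (0.3 : ℝ) * (p.1 ^ 3 * p.2 ^ 1))
      ((gaussianReal 0 vu).prod (gaussianReal 0 vn)) := I31.const_mul 0.3
  have T3 : Integrable (fun p : ℝ × ℝ => (0.3 : ℝ) * (p.1 ^ 3 * p.2 ^ 1)
      + ((0.3 : ℝ) * (p.1 ^ 2 * p.2 ^ 2) + (0.1 : ℝ) * (p.1 ^ 1 * p.2 ^ 3)))
      ((gaussianReal 0 vu).prod (gaussianReal 0 vn)) := T3'.add T4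
  have T2' : Integrable (fun p : ℝ × ℝ => (0.1 : ℝ) * (p.1 ^ 4 * p.2 ^ 0))
      ((gaussianReal 0 vu).prod (gaussianReal 0 vn)) := I40.const_mul 0.1
  have T2 : Integrable (fun p : ℝ × ℝ => (0.1 : ℝ) * (p.1 ^ 4 * p.2 ^ 0)
      + ((0.3 : ℝ) * (p.1 ^ 3 * p.2 ^ 1)
        + ((0.3 : ℝ) * (p.1 ^ 2 * p.2 ^ 2) + (0.1 : ℝ) * (p.1 ^ 1 * p.2 ^ 3))))
      ((gaussianReal 0 vu).prod (gaussianReal 0 vn)) := T2'.add T3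
  have T1 : Integrable (fun p : ℝ × ℝ => p.1 ^ 1 * p.2 ^ 1 + ((0.1 : ℝ) * (p.1 ^ 4 * p.2 ^ 0)
      + ((0.3 : ℝ) * (p.1 ^ 3 * p.2 ^ 1)
        + ((0.3 : ℝ) * (p.1 ^ 2 * p.2 ^ 2) + (0.1 : ℝ) * (p.1 ^ 1 * p.2 ^ 3)))))
      ((gaussianReal 0 vu).prod (gaussianReal 0 vn)) := I11.add T2
  rw [hsplit,
    integral_add I20 T1,
    integral_add I11 T2,
    integral_add T2' T3,
    integral_add T3' T4,
    integral_add T5' T5,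
    integral_const_mul, integral_const_mul, integral_const_mul, integral_const_mul,
    integral_monomial, integral_monomial, integral_monomial, integral_monomial,
    integral_monomial, integral_monomial,
    moment_zero_gaussianReal, moment_one'_gaussianReal, moment_one'_gaussianReal,
    moment_two_gaussianReal, moment_two_gaussianReal, moment_three_gaussianReal,
    moment_four_gaussianReal]
  ring

lemma integral_fst_sq :
    ∫ p : ℝ × ℝ, p.1 ^ 2 ∂((gaussianReal 0 vu).prod (gaussianReal 0 vn)) = (vu : ℝ) := by
  have h : (fun p : ℝ × ℝ => p.1 ^ 2) = fun p => p.1 ^ 2 * p.2 ^ 0 := by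
    funext p
    ring
  rw [h, integral_monomial, moment_two_gaussianReal, moment_zero_gaussianReal, mul_one]

lemma quad (b : ℝ) :
    ∫ p : ℝ × ℝ, (((p.1 + p.2) + 0.1 * (p.1 + p.2) ^ 3) - b * p.1) ^ 2
        ∂((gaussianReal 0 vu).prod (gaussianReal 0 vn))
      = (∫ p : ℝ × ℝ, ((p.1 + p.2) + 0.1 * (p.1 + p.2) ^ 3) ^ 2
            ∂((gaussianReal 0 vu).prod (gaussianReal 0 vn)))
        - 2 * b * ((vu : ℝ) * (1 + 0.3 * (vu : ℝ) + 0.3 * (vn : ℝ))) + b ^ 2 * (vu : ℝ) := by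
  have hU2 : Integrable (fun p : ℝ × ℝ => ((p.1 + p.2) + 0.1 * (p.1 + p.2) ^ 3) ^ 2)
      ((gaussianReal 0 vu).prod (gaussianReal 0 vn)) := by
    have h : (fun p : ℝ × ℝ => ((p.1 + p.2) + 0.1 * (p.1 + p.2) ^ 3) ^ 2)
        = fun p => (p.1 + p.2) ^ 2 + ((0.2 : ℝ) * (p.1 + p.2) ^ 4
            + (0.01 : ℝ) * (p.1 + p.2) ^ 6) := by
      funext p
      ring
    rw [h]
    exact (integrable_add_pow vu vn 2).add (((integrable_add_pow vu vn 4).const_mul _).add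
      ((integrable_add_pow vu vn 6).const_mul _))
  have hUX : Integrable (fun p : ℝ × ℝ => ((p.1 + p.2) + 0.1 * (p.1 + p.2) ^ 3) * p.1)
      ((gaussianReal 0 vu).prod (gaussianReal 0 vn)) := by
    have h : (fun p : ℝ × ℝ => ((p.1 + p.2) + 0.1 * (p.1 + p.2) ^ 3) * p.1)
        = fun p => p.1 * (p.1 + p.2) ^ 1 + (0.1 : ℝ) * (p.1 * (p.1 + p.2) ^ 3) := by
      funext p
      ring
    rw [h]
    exact (integrable_fst_mul_add_pow vu vn 1).add
      ((integrable_fst_mul_add_pow vu vn 3).const_mul _)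
  have hX2 : Integrable (fun p : ℝ × ℝ => p.1 ^ 2)
      ((gaussianReal 0 vu).prod (gaussianReal 0 vn)) := by
    have h : (fun p : ℝ × ℝ => p.1 ^ 2) = fun p => p.1 ^ 2 * p.2 ^ 0 := by
      funext p
      ring
    rw [h]
    exact integrable_monomial vu vn 2 0
  have hsplit : (fun p : ℝ × ℝ => (((p.1 + p.2) + 0.1 * (p.1 + p.2) ^ 3) - b * p.1) ^ 2)
      = fun p => (((p.1 + p.2) + 0.1 * (p.1 + p.2) ^ 3) ^ 2
          - (2 * b) * (((p.1 + p.2) + 0.1 * (p.1 + p.2) ^ 3) * p.1)) + b ^ 2 * p.1 ^ 2 := by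
    funext p
    ring
  have hUX' : Integrable (fun p : ℝ × ℝ =>
      (2 * b) * (((p.1 + p.2) + 0.1 * (p.1 + p.2) ^ 3) * p.1))
      ((gaussianReal 0 vu).prod (gaussianReal 0 vn)) := hUX.const_mul (2 * b)
  have hSub : Integrable (fun p : ℝ × ℝ => ((p.1 + p.2) + 0.1 * (p.1 + p.2) ^ 3) ^ 2
      - (2 * b) * (((p.1 + p.2) + 0.1 * (p.1 + p.2) ^ 3) * p.1))
      ((gaussianReal 0 vu).prod (gaussianReal 0 vn)) := hU2.sub hUX'
  have hX2' : Integrable (fun p : ℝ × ℝ => b ^ 2 * p.1 ^ 2)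
      ((gaussianReal 0 vu).prod (gaussianReal 0 vn)) := hX2.const_mul (b ^ 2)
  rw [hsplit, integral_add hSub hX2',
    integral_sub hU2 hUX', integral_const_mul, integral_const_mul,
    integral_cross, integral_fst_sq]

lemma aux_lt {A K s b b₀ : ℝ} (hs : 0 < s) (hK : b₀ = K) (hb : b ≠ b₀) :
    A - 2 * b₀ * (s * K) + b₀ ^ 2 * s < A - 2 * b * (s * K) + b ^ 2 * s := by
  subst hK
  have hsq : 0 < (b - b₀) ^ 2 :=
    lt_of_le_of_ne (sq_nonneg _) (Ne.symm (pow_ne_zero 2 (sub_ne_zero.mpr hb)))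
  nlinarith [mul_pos hs hsq]

end HammAux

open MeasureTheory ProbabilityTheory

/-- The joint law of the independent zero-mean Gaussian input (variance `σu²`) and
process noise (variance `σn²`) of the Hammerstein example. -/
noncomputable def hammersteinLaw (σu σn : ℝ) : Measure (ℝ × ℝ) :=
  (gaussianReal 0 ⟨σu ^ 2, sq_nonneg σu⟩).prod (gaussianReal 0 ⟨σn ^ 2, sq_nonneg σn⟩)

/-- **BLA gain of the Hammerstein example (Bussgang).** For `f(x) = x + 0.1x³` and
independent centered Gaussians `U`, `N` with variances `σu²`, `σn²`, the map
`b ↦ E[(f(U+N) − bU)²]` attains its unique minimum at `b₀ = 1 + 0.3σu² + 0.3σn²`, and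
`b₀ = E[f(U+N)·U] / E[U²]`. -/
theorem hammerstein_bla_gain (σu σn : ℝ) (hσu : 0 < σu) (hσn : 0 ≤ σn)
    (b₀ : ℝ) (hb₀ : b₀ = 1 + 0.3 * σu ^ 2 + 0.3 * σn ^ 2) :
    (∀ b : ℝ, b ≠ b₀ →
      ∫ p : ℝ × ℝ, (((p.1 + p.2) + 0.1 * (p.1 + p.2) ^ 3) - b₀ * p.1) ^ 2
          ∂(hammersteinLaw σu σn)
        < ∫ p : ℝ × ℝ, (((p.1 + p.2) + 0.1 * (p.1 + p.2) ^ 3) - b * p.1) ^ 2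
          ∂(hammersteinLaw σu σn)) ∧
    b₀ = (∫ p : ℝ × ℝ, ((p.1 + p.2) + 0.1 * (p.1 + p.2) ^ 3) * p.1 ∂(hammersteinLaw σu σn))
          / (∫ p : ℝ × ℝ, p.1 ^ 2 ∂(hammersteinLaw σu σn)) := by
  have hcu : ((⟨σu ^ 2, sq_nonneg σu⟩ : NNReal) : ℝ) = σu ^ 2 := rfl
  have hcn : ((⟨σn ^ 2, sq_nonneg σn⟩ : NNReal) : ℝ) = σn ^ 2 := rfl
  have hσ : (0 : ℝ) < σu ^ 2 := pow_pos hσu 2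
  constructor
  · intro b hb
    simp only [hammersteinLaw]
    erw [HammAux.quad, HammAux.quad]
    change _ - 2 * b₀ * (σu ^ 2 * (1 + 0.3 * σu ^ 2 + 0.3 * σn ^ 2)) + b₀ ^ 2 * σu ^ 2
      < _ - 2 * b * (σu ^ 2 * (1 + 0.3 * σu ^ 2 + 0.3 * σn ^ 2)) + b ^ 2 * σu ^ 2
    exact HammAux.aux_lt hσ hb₀ hb
  · simp only [hammersteinLaw]
    erw [HammAux.integral_cross, HammAux.integral_fst_sq]
    change b₀ = σu ^ 2 * (1 + 0.3 * σu ^ 2 + 0.3 * σn ^ 2) / σu ^ 2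
    rw [hb₀]
    have hσ' : σu ^ 2 ≠ 0 := ne_of_gt hσ
    field_simp
end
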